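/- Let H be a collection of rooted trees in a graph G, one tree T_x per source x in a source set S, satisfying the CSSSP consistency property (for all u, v, the u-to-v path is identical in all trees of H containing one). Let c be a fixed vertex, and let T be the union, over x ∈ S with c ∈ T_x, of the path from x to c in T_x. Then T forms an in-tree rooted at c (every vertex of T has a unique path in T to c). -/

import Mathlib

private lemma zip_tail_cons {V : Type*} {q : List V} (x : V) :
    q.zip q.tail ⊆ (x :: q).zip q := by
  cases q with
  | nil => simp
  | cons y q' => intro e he; simp [List.zip]; right; simpa [List.zip] using he

private lemma zip_suffix {V : Type*} {s p : List V} (h : s <:+ p) :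
    s.zip s.tail ⊆ p.zip p.tail := by
  obtain ⟨t, rfl⟩ := h
  induction t with
  | nil => simp
  | cons x t ih =>
      intro e he
      exact zip_tail_cons x (ih he)

private lemma chain_reach {V : Type*} (r : V → V → Prop) (c : V) :
    ∀ s : List V, ∀ a, s.head? = some a → s.getLast? = some c →
      (∀ e ∈ s.zip s.tail, r e.1 e.2) → Relation.ReflTransGen r a c := by
  intro s
  induction s with
  | nil => intro a h; simp at h
  | cons x q ih =>
      intro a hh hl hr
      simp at hh; subst hh
      cases q with
      | nil => simp at hl; subst hl; exact Relation.ReflTransGen.refl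
      | cons y q' =>
          have h1 : r x y := hr (x, y) (by simp [List.zip])
          have h2 : Relation.ReflTransGen r y c := by
            refine ih y rfl ?_ ?_
            · simpa [List.getLast?_cons_cons] using hl
            · intro e he; exact hr e (by simp [List.zip]; right; simpa [List.zip] using he)
          exact Relation.ReflTransGen.head h1 h2

private lemma zip_decompose {V : Type*} {p : List V} {a b : V}
    (h : (a, b) ∈ p.zip p.tail) : ∃ p₁ p₂, p = p₁ ++ a :: b :: p₂ := by
  induction p with
  | nil => simp at h
  | cons x q ih =>
      cases q with
      | nil => simp at h
      | cons y q' =>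
          simp [List.zip] at h
          rcases h with ⟨rfl, rfl⟩ | h
          · exact ⟨[], q', rfl⟩
          · obtain ⟨p₁, p₂, hp⟩ := ih (by simpa [List.zip] using h)
            exact ⟨x :: p₁, p₂, by simp [hp]⟩

/-- Let `isPath x u v p` mean that `p` is the (unique) path from
`u` to `v` in the tree `T_x` rooted at source `x` of a CSSSP collection.  Under
the basic tree-path axioms and the CSSSP consistency property, the union `T`,
over sources `x` whose tree contains `c`, of the edges of the path from `x` to
`c` in `T_x`, forms an in-tree rooted at `c`: every vertex of `T` other than
`c` has exactly one outgoing edge in `T`, and every vertex of `T` reaches `c`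
using edges of `T`. -/
theorem stmt_2 {V ι : Type*} (isPath : ι → V → V → List V → Prop)
    (src : ι → V) (c : V)
    (hends : ∀ i u v p, isPath i u v p → p.head? = some u ∧ p.getLast? = some v)
    (hsimple : ∀ i u v p, isPath i u v p → p.Nodup)
    (hsplit : ∀ i u v z p₁ p₂, isPath i u v (p₁ ++ z :: p₂) →
        isPath i u z (p₁ ++ [z]) ∧ isPath i z v (z :: p₂))
    (hcsssp : ∀ i j u v p q, isPath i u v p → isPath j u v q → p = q)
    (T : Set (V × V))
    (hT : T = {e | ∃ x p, isPath x (src x) c p ∧ e ∈ p.zip p.tail}) :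
    (∀ a b, (a, b) ∈ T → a ≠ c → ∃! b', (a, b') ∈ T) ∧
    (∀ a b, (a, b) ∈ T →
        Relation.ReflTransGen (fun u v => (u, v) ∈ T) a c ∧
        Relation.ReflTransGen (fun u v => (u, v) ∈ T) b c) := by
  subst hT
  -- key: from an edge (a,b) ∈ T with witness (x, p), get the suffix path from a.
  have key : ∀ a b : V, (a, b) ∈ {e : V × V | ∃ x p, isPath x (src x) c p ∧ e ∈ p.zip p.tail} →
      ∃ x p₂, isPath x a c (a :: b :: p₂) ∧
        ∀ e ∈ (a :: b :: p₂).zip (b :: p₂),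
          e ∈ {e : V × V | ∃ x p, isPath x (src x) c p ∧ e ∈ p.zip p.tail} := by
    intro a b h
    obtain ⟨x, p, hp, hab⟩ := h
    obtain ⟨p₁, p₂, rfl⟩ := zip_decompose hab
    have hs := (hsplit x (src x) c a p₁ (b :: p₂) hp).2
    refine ⟨x, p₂, hs, ?_⟩
    intro e he
    refine ⟨x, p₁ ++ a :: b :: p₂, hp, ?_⟩
    exact zip_suffix ⟨p₁, rfl⟩ (by simpa [List.zip] using he)
  constructor
  · intro a b hab _hac
    refine ⟨b, hab, ?_⟩
    intro b' hab'
    obtain ⟨x, p₂, hpx, -⟩ := key a b hab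
    obtain ⟨y, q₂, hpy, -⟩ := key a b' hab'
    have := hcsssp y x a c _ _ hpy hpx
    simp at this
    exact this.1
  · intro a b hab
    obtain ⟨x, p₂, hpx, hsub⟩ := key a b hab
    constructor
    · obtain ⟨hh, hl⟩ := hends x a c _ hpx
      exact chain_reach _ c (a :: b :: p₂) a hh hl (fun e he => hsub e (by simpa [List.zip] using he))
    · have hs := (hsplit x a c b [a] p₂ (by simpa using hpx)).2
      obtain ⟨hh, hl⟩ := hends x b c _ hs
      refine chain_reach _ c (b :: p₂) b hh hl (fun e he => hsub e ?_)
      exact zip_tail_cons a (by simpa using he)
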